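/- arXiv:1501.01219 — 7 statements merged into one kernel-verified Lean document; each statement's English description precedes it below -/
import Mathlib

section
/- Let n, p ≥ 1, ρ > 0 and m ∈ {0,…,n}. Let S be a map assigning to every data matrix X ∈ ℝ^{n×p} a symmetric positive semidefinite p×p real matrix S(X), and let Θ̂ be a map assigning to every X ∈ ℝ^{n×p} a symmetric positive definite p×p matrix Θ̂(X) that maximizes the GLASSO objective Q_{S(X)}(Θ) = log det Θ − tr(S(X)Θ) − ρ ∑_{j,k=1}^p |Θ_{jk}| over all symmetric positive definite p×p matrices. Fix X ∈ ℝ^{n×p}. If there exists a finite constant M such that λ₁(S(X')) ≤ λ₁(S(X)) + M for every m-cellwise corruption X' of X, then there exists a finite constant M' such that max(|λ₁(Θ̂(X')) − λ₁(Θ̂(X))|, |λ_p(Θ̂(X'))⁻¹ − λ_p(Θ̂(X))⁻¹|) ≤ M' for every m-cellwise corruption X' of X. (This is the content of Theorem 1: the precision matrix estimator obtained by plugging S into the GLASSO inherits the explosion breakdown point of S under cellwise contamination.) -/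
open Matrix

/-- The largest eigenvalue of a real matrix (as the supremum of its set of eigenvalues). -/
noncomputable def maxEig {p : ℕ} (A : Matrix (Fin p) (Fin p) ℝ) : ℝ :=
  sSup {μ : ℝ | ∃ v : Fin p → ℝ, v ≠ 0 ∧ A.mulVec v = μ • v}

/-- The smallest eigenvalue of a real matrix (as the infimum of its set of eigenvalues). -/
noncomputable def minEig {p : ℕ} (A : Matrix (Fin p) (Fin p) ℝ) : ℝ :=
  sInf {μ : ℝ | ∃ v : Fin p → ℝ, v ≠ 0 ∧ A.mulVec v = μ • v}

/-- The GLASSO objective `Q_S(Θ) = log det Θ − tr(SΘ) − ρ ∑_{j,k} |Θ_{jk}|`. -/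
noncomputable def glassoObj {p : ℕ} (ρ : ℝ) (S Θ : Matrix (Fin p) (Fin p) ℝ) : ℝ :=
  Real.log Θ.det - (S * Θ).trace - ρ * ∑ j, ∑ k, |Θ j k|

/-- `X'` is an `m`-cellwise corruption of `X`: in every column at most `m` cells differ. -/
def CellwiseCorruption {n p : ℕ} (m : ℕ) (X X' : Matrix (Fin n) (Fin p) ℝ) : Prop :=
  ∀ j : Fin p, {i : Fin n | X' i j ≠ X i j}.ncard ≤ m

variable {p : ℕ}

/-- The set of (real-eigenvector) eigenvalues. -/
def eigSet (A : Matrix (Fin p) (Fin p) ℝ) : Set ℝ :=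
  {μ : ℝ | ∃ v : Fin p → ℝ, v ≠ 0 ∧ A.mulVec v = μ • v}

lemma abs_le_of_mem_eigSet {A : Matrix (Fin p) (Fin p) ℝ} {μ : ℝ} (h : μ ∈ eigSet A) :
    |μ| ≤ ∑ j, ∑ k, |A j k| := by
  obtain ⟨v, hv, hAv⟩ := h
  obtain ⟨k₀, hk₀⟩ := Function.ne_iff.mp hv
  have hne : (Finset.univ : Finset (Fin p)).Nonempty := ⟨k₀, Finset.mem_univ _⟩
  obtain ⟨i, -, hi⟩ := Finset.exists_max_image Finset.univ (fun k => |v k|) hne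
  have hvi : 0 < |v i| := lt_of_lt_of_le (abs_pos.mpr hk₀) (hi k₀ (Finset.mem_univ _))
  have key : |μ| * |v i| ≤ (∑ k, |A i k|) * |v i| := by
    have h1 : |μ| * |v i| = |(A.mulVec v) i| := by
      rw [hAv]; simp [abs_mul]
    rw [h1]
    have h2 : |(A.mulVec v) i| ≤ ∑ k, |A i k| * |v i| := by
      rw [Matrix.mulVec, dotProduct]
      refine le_trans (Finset.abs_sum_le_sum_abs _ _) ?_
      refine Finset.sum_le_sum fun k _ => ?_
      rw [abs_mul]
      exact mul_le_mul_of_nonneg_left (hi k (Finset.mem_univ _)) (abs_nonneg _)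
    simpa [Finset.sum_mul] using h2
  have hμ : |μ| ≤ ∑ k, |A i k| := le_of_mul_le_mul_right key hvi
  refine hμ.trans ?_
  exact Finset.single_le_sum (f := fun j => ∑ k, |A j k|)
    (fun j _ => Finset.sum_nonneg fun k _ => abs_nonneg _) (Finset.mem_univ i)

lemma eigSet_bddAbove (A : Matrix (Fin p) (Fin p) ℝ) : BddAbove (eigSet A) :=
  ⟨∑ j, ∑ k, |A j k|, fun μ hμ => (le_abs_self μ).trans (abs_le_of_mem_eigSet hμ)⟩

lemma eigSet_bddBelow (A : Matrix (Fin p) (Fin p) ℝ) : BddBelow (eigSet A) :=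
  ⟨-(∑ j, ∑ k, |A j k|), fun μ hμ => by
    have h := abs_le_of_mem_eigSet hμ
    have := neg_abs_le μ
    linarith⟩

lemma eigenvalues_mem_eigSet {A : Matrix (Fin p) (Fin p) ℝ} (hA : A.IsHermitian) (i : Fin p) :
    hA.eigenvalues i ∈ eigSet A := by
  refine ⟨⇑(hA.eigenvectorBasis i), ?_, hA.mulVec_eigenvectorBasis i⟩
  intro h
  exact hA.eigenvectorBasis.orthonormal.ne_zero i (by ext x; exact congrFun h x)

lemma det_sub_smul_one {A : Matrix (Fin p) (Fin p) ℝ} (hA : A.IsHermitian) (μ : ℝ) :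
    (A - μ • (1 : Matrix (Fin p) (Fin p) ℝ)).det = ∏ i, (hA.eigenvalues i - μ) := by
  set U : Matrix (Fin p) (Fin p) ℝ := (hA.eigenvectorUnitary : Matrix (Fin p) (Fin p) ℝ)
  have hU1 : U * star U = 1 := Matrix.mem_unitaryGroup_iff.mp hA.eigenvectorUnitary.2
  have hU2 : star U * U = 1 := Matrix.mem_unitaryGroup_iff'.mp hA.eigenvectorUnitary.2
  set D : Matrix (Fin p) (Fin p) ℝ := Matrix.diagonal (RCLike.ofReal ∘ hA.eigenvalues)
  have hAeq : A = U * D * star U := hA.spectral_theorem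
  have key : A - μ • 1 = U * (D - μ • 1) * star U := by
    rw [Matrix.mul_sub, Matrix.sub_mul, ← hAeq]
    congr 1
    rw [Matrix.mul_smul, Matrix.mul_one, Matrix.smul_mul, hU1]
  rw [key, Matrix.det_mul, Matrix.det_mul]
  have hdetU : U.det * (star U).det = 1 := by
    rw [← Matrix.det_mul, hU1, Matrix.det_one]
  have : U.det * (D - μ • 1).det * (star U).det = (D - μ • 1).det * (U.det * (star U).det) := by
    ring
  rw [this, hdetU, mul_one]
  have hD : D - μ • (1 : Matrix (Fin p) (Fin p) ℝ)
      = Matrix.diagonal (fun i => hA.eigenvalues i - μ) := by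
    ext i j
    rcases eq_or_ne i j with rfl | hij
    · simp [D, Matrix.one_apply_eq]
    · simp [D, Matrix.diagonal_apply_ne _ hij, Matrix.one_apply_ne hij]
  rw [hD, Matrix.det_diagonal]

lemma exists_eigenvalues_eq {A : Matrix (Fin p) (Fin p) ℝ} (hA : A.IsHermitian) {μ : ℝ}
    (h : μ ∈ eigSet A) : ∃ i, hA.eigenvalues i = μ := by
  obtain ⟨v, hv, hAv⟩ := h
  have hz : (A - μ • 1) *ᵥ v = 0 := by
    rw [Matrix.sub_mulVec, Matrix.smul_mulVec, Matrix.one_mulVec, hAv, sub_self]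
  have hdet : (A - μ • (1 : Matrix (Fin p) (Fin p) ℝ)).det = 0 :=
    Matrix.exists_mulVec_eq_zero_iff.mp ⟨v, hv, hz⟩
  rw [det_sub_smul_one hA μ] at hdet
  obtain ⟨i, -, hi⟩ := Finset.prod_eq_zero_iff.mp hdet
  exact ⟨i, by linarith [sub_eq_zero.mp hi]⟩

lemma trace_eq_sum_eigenvalues {A : Matrix (Fin p) (Fin p) ℝ} (hA : A.IsHermitian) :
    A.trace = ∑ i, hA.eigenvalues i := by
  have hU2 : star (hA.eigenvectorUnitary : Matrix (Fin p) (Fin p) ℝ)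
      * (hA.eigenvectorUnitary : Matrix (Fin p) (Fin p) ℝ) = 1 :=
    Matrix.mem_unitaryGroup_iff'.mp hA.eigenvectorUnitary.2
  conv_lhs => rw [hA.spectral_theorem, Unitary.conjStarAlgAut_apply]
  rw [Matrix.trace_mul_cycle, hU2, Matrix.one_mul, Matrix.trace_diagonal]
  simp

lemma det_eq_prod_eigenvalues' {A : Matrix (Fin p) (Fin p) ℝ} (hA : A.IsHermitian) :
    A.det = ∏ i, hA.eigenvalues i := by
  simpa using hA.det_eq_prod_eigenvalues

lemma psd_trace_nonneg {A : Matrix (Fin p) (Fin p) ℝ} (hA : A.PosSemidef) : 0 ≤ A.trace := by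
  rw [Matrix.trace]
  refine Finset.sum_nonneg fun i _ => ?_
  have h := hA.dotProduct_mulVec_nonneg (Pi.single i 1)
  simpa [dotProduct, Matrix.mulVec, Pi.single_apply, Finset.sum_ite_eq] using h

lemma trace_mul_psd_nonneg {T Θ : Matrix (Fin p) (Fin p) ℝ} (hT : T.PosSemidef)
    (hΘ : Θ.PosSemidef) : 0 ≤ (T * Θ).trace := by
  obtain ⟨B, rfl⟩ : ∃ B : Matrix (Fin p) (Fin p) ℝ, Θ = Bᴴ * B := by
    open scoped MatrixOrder in exact CStarAlgebra.nonneg_iff_eq_star_mul_self.mp hΘ.nonneg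
  have h1 : (T * (Bᴴ * B)).trace = (B * T * Bᴴ).trace := by
    rw [Matrix.trace_mul_comm T (Bᴴ * B), Matrix.trace_mul_comm (B * T) Bᴴ, Matrix.mul_assoc]
  rw [h1]
  exact psd_trace_nonneg (hT.mul_mul_conjTranspose_same B)

lemma glassoObj_one {p : ℕ} (ρ : ℝ) (T : Matrix (Fin p) (Fin p) ℝ) :
    glassoObj ρ T 1 = -T.trace - ρ * p := by
  unfold glassoObj
  rw [Matrix.det_one, Real.log_one, Matrix.mul_one]
  have h1 : ∀ j : Fin p, ∑ k, |(1 : Matrix (Fin p) (Fin p) ℝ) j k| = 1 := by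
    intro j
    have : ∀ k, |(1 : Matrix (Fin p) (Fin p) ℝ) j k| = if j = k then 1 else 0 := by
      intro k
      rcases eq_or_ne j k with rfl | h
      · simp [Matrix.one_apply_eq]
      · simp [Matrix.one_apply_ne h, h]
    simp [this]
  rw [Finset.sum_congr rfl fun j _ => h1 j]
  simp

noncomputable def bigB (p : ℕ) (ρ C0 : ℝ) : ℝ :=
  (2 / ρ) * ((p : ℝ) * (-1 - Real.log (ρ / 2)) + C0 + ρ * p)

noncomputable def smallE (p : ℕ) (ρ C0 : ℝ) : ℝ :=
  Real.exp (-(C0 + ρ * p)) / (bigB p ρ C0) ^ (p - 1)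

lemma key_bounds {p : ℕ} (hp : 1 ≤ p) {ρ : ℝ} (hρ : 0 < ρ)
    {T Θ : Matrix (Fin p) (Fin p) ℝ} (hT : T.PosSemidef) (hΘ : Θ.PosDef)
    {C0 : ℝ} (htr : T.trace ≤ C0)
    (hopt : glassoObj ρ T 1 ≤ glassoObj ρ T Θ) :
    0 < bigB p ρ C0 ∧ 0 < maxEig Θ ∧ maxEig Θ ≤ bigB p ρ C0 ∧
      0 < smallE p ρ C0 ∧ smallE p ρ C0 ≤ minEig Θ := by
  have hpne : Nonempty (Fin p) := ⟨⟨0, hp⟩⟩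
  have hH : Θ.IsHermitian := hΘ.1
  set lam : Fin p → ℝ := hH.eigenvalues with hlam
  have hlampos : ∀ i, 0 < lam i := hΘ.eigenvalues_pos
  have hdetpos : 0 < Θ.det := hΘ.det_pos
  set A : ℝ := ∑ j, ∑ k, |Θ j k| with hAdef
  have hdiagpos : ∀ i, 0 < Θ i i := by
    intro i
    have h := hΘ.dotProduct_mulVec_pos (x := Pi.single i 1) (by simp [Pi.single_eq_same, Function.ne_iff])
    simpa [dotProduct, Matrix.mulVec, Pi.single_apply, Finset.sum_ite_eq] using h
  have htrΘpos : 0 < Θ.trace := by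
    rw [Matrix.trace]
    exact Finset.sum_pos (fun i _ => hdiagpos i) Finset.univ_nonempty
  have htrΘA : Θ.trace ≤ A := by
    rw [Matrix.trace, hAdef]
    refine Finset.sum_le_sum fun j _ => ?_
    refine le_trans (le_abs_self _) ?_
    exact Finset.single_le_sum (f := fun k => |Θ j k|) (fun k _ => abs_nonneg _)
      (Finset.mem_univ j)
  have hApos : 0 < A := htrΘpos.trans_le htrΘA
  set c1 : ℝ := (p : ℝ) * (-1 - Real.log (ρ / 2)) with hc1
  have htrlam : Θ.trace = ∑ i, lam i := trace_eq_sum_eigenvalues hH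
  have hρ2 : (0 : ℝ) < ρ / 2 := by linarith
  have hlogdet_le : Real.log Θ.det ≤ (ρ / 2) * Θ.trace + c1 := by
    rw [det_eq_prod_eigenvalues' hH, Real.log_prod (fun i _ => (hlampos i).ne')]
    have step : ∀ i, Real.log (lam i) ≤ (ρ / 2) * lam i - 1 - Real.log (ρ / 2) := by
      intro i
      have h0 : (0 : ℝ) < (ρ / 2) * lam i := mul_pos hρ2 (hlampos i)
      have h1 := Real.log_le_sub_one_of_pos h0
      rw [Real.log_mul hρ2.ne' (hlampos i).ne'] at h1
      linarith
    calc ∑ i, Real.log (lam i) ≤ ∑ i, ((ρ / 2) * lam i - 1 - Real.log (ρ / 2)) :=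
          Finset.sum_le_sum fun i _ => step i
      _ = (ρ / 2) * Θ.trace + c1 := by
          rw [htrlam, hc1]
          simp [Finset.sum_sub_distrib, Finset.mul_sum]
          ring
  have hTΘ : 0 ≤ (T * Θ).trace := trace_mul_psd_nonneg hT hΘ.posSemidef
  have hopt' : -T.trace - ρ * p ≤ Real.log Θ.det - (T * Θ).trace - ρ * A := by
    rw [← glassoObj_one ρ T]
    exact hopt
  have hK : (ρ / 2) * A ≤ c1 + C0 + ρ * p := by
    have h2 : ρ * A ≤ Real.log Θ.det + T.trace + ρ * p := by linarith
    have h3 : Real.log Θ.det ≤ (ρ / 2) * A + c1 := by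
      refine hlogdet_le.trans ?_
      have := mul_le_mul_of_nonneg_left htrΘA hρ2.le
      linarith
    linarith
  have hA_le : A ≤ bigB p ρ C0 := by
    have hinv : (2 / ρ) * (ρ / 2) = 1 := by field_simp
    calc A = (2 / ρ) * ((ρ / 2) * A) := by rw [← mul_assoc, hinv, one_mul]
      _ ≤ (2 / ρ) * (c1 + C0 + ρ * p) := by
          refine mul_le_mul_of_nonneg_left hK (by positivity)
      _ = bigB p ρ C0 := by rw [bigB, hc1]
  have hB0pos : 0 < bigB p ρ C0 := hApos.trans_le hA_le
  have habs_le : ∀ μ ∈ eigSet Θ, μ ≤ bigB p ρ C0 := fun μ hμ =>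
    (le_abs_self μ).trans ((abs_le_of_mem_eigSet hμ).trans hA_le)
  have hmax_le : maxEig Θ ≤ bigB p ρ C0 := Real.sSup_le habs_le hB0pos.le
  have hi0 : lam (Classical.arbitrary (Fin p)) ∈ eigSet Θ :=
    eigenvalues_mem_eigSet hH _
  have hmax_pos : 0 < maxEig Θ :=
    lt_of_lt_of_le (hlampos _) (le_csSup (eigSet_bddAbove Θ) hi0)
  have hlogdet_ge : -(C0 + ρ * p) ≤ Real.log Θ.det := by
    have : 0 ≤ ρ * A := by positivity
    linarith
  have hdet_ge : Real.exp (-(C0 + ρ * p)) ≤ Θ.det := by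
    rw [← Real.exp_log hdetpos]
    exact Real.exp_le_exp.mpr hlogdet_ge
  have hEpos : 0 < smallE p ρ C0 :=
    div_pos (Real.exp_pos _) (pow_pos hB0pos _)
  have hmin_ge : smallE p ρ C0 ≤ minEig Θ := by
    refine le_csInf ⟨_, hi0⟩ fun μ hμ => ?_
    obtain ⟨j, hj⟩ := exists_eigenvalues_eq hH hμ
    have hprod : Θ.det = lam j * ∏ i ∈ Finset.univ.erase j, lam i := by
      rw [det_eq_prod_eigenvalues' hH, Finset.mul_prod_erase _ _ (Finset.mem_univ j)]
    have herase : ∏ i ∈ Finset.univ.erase j, lam i ≤ (bigB p ρ C0) ^ (p - 1) := by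
      calc ∏ i ∈ Finset.univ.erase j, lam i
          ≤ ∏ i ∈ Finset.univ.erase j, bigB p ρ C0 :=
            Finset.prod_le_prod (fun i _ => (hlampos i).le)
              (fun i _ => (le_abs_self _).trans ((abs_le_of_mem_eigSet
                (eigenvalues_mem_eigSet hH i)).trans hA_le))
        _ = (bigB p ρ C0) ^ (p - 1) := by
            rw [Finset.prod_const, Finset.card_erase_of_mem (Finset.mem_univ j)]
            simp
    have hdet_le : Θ.det ≤ lam j * (bigB p ρ C0) ^ (p - 1) := by
      rw [hprod]
      exact mul_le_mul_of_nonneg_left herase (hlampos j).le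
    have : Real.exp (-(C0 + ρ * p)) ≤ lam j * (bigB p ρ C0) ^ (p - 1) :=
      hdet_ge.trans hdet_le
    rw [← hj]
    rw [smallE, div_le_iff₀ (pow_pos hB0pos _)]
    linarith
  exact ⟨hB0pos, hmax_pos, hmax_le, hEpos, hmin_ge⟩

theorem glasso_inherits_breakdown
    (n p : ℕ) (hn : 1 ≤ n) (hp : 1 ≤ p) (ρ : ℝ) (hρ : 0 < ρ) (m : ℕ) (hm : m ≤ n)
    (S : Matrix (Fin n) (Fin p) ℝ → Matrix (Fin p) (Fin p) ℝ)
    (hS : ∀ X, (S X).PosSemidef)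
    (Θhat : Matrix (Fin n) (Fin p) ℝ → Matrix (Fin p) (Fin p) ℝ)
    (hΘpd : ∀ X, (Θhat X).PosDef)
    (hΘmax : ∀ X, ∀ Θ : Matrix (Fin p) (Fin p) ℝ, Θ.PosDef →
      glassoObj ρ (S X) Θ ≤ glassoObj ρ (S X) (Θhat X))
    (X : Matrix (Fin n) (Fin p) ℝ) (M : ℝ)
    (hM : ∀ X', CellwiseCorruption m X X' → maxEig (S X') ≤ maxEig (S X) + M) :
    ∃ M' : ℝ, ∀ X', CellwiseCorruption m X X' →
      max |maxEig (Θhat X') - maxEig (Θhat X)|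
          |(minEig (Θhat X'))⁻¹ - (minEig (Θhat X))⁻¹| ≤ M' := by
  classical
  set C0 : ℝ := p * (maxEig (S X) + M) with hC0
  have hXself : CellwiseCorruption m X X := by
    intro j
    have h : {i : Fin n | X i j ≠ X i j} = ∅ := by simp
    simp [h]
  have key : ∀ X', CellwiseCorruption m X X' →
      0 < maxEig (Θhat X') ∧ maxEig (Θhat X') ≤ bigB p ρ C0 ∧
      0 < smallE p ρ C0 ∧ smallE p ρ C0 ≤ minEig (Θhat X') := by
    intro X' hX'
    have hH := (hS X').1
    have htr : (S X').trace ≤ C0 := by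
      rw [trace_eq_sum_eigenvalues hH]
      have hb : ∀ i, hH.eigenvalues i ≤ maxEig (S X) + M := fun i =>
        (le_csSup (eigSet_bddAbove _) (eigenvalues_mem_eigSet hH i)).trans (hM X' hX')
      calc ∑ i, hH.eigenvalues i ≤ ∑ _i : Fin p, (maxEig (S X) + M) :=
            Finset.sum_le_sum fun i _ => hb i
        _ = C0 := by rw [hC0, Finset.sum_const]; simp; ring
    obtain ⟨hB, h1, h2, h3, h4⟩ := key_bounds hp hρ (hS X') (hΘpd X') htr
      (hΘmax X' 1 Matrix.PosDef.one)
    exact ⟨h1, h2, h3, h4⟩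
  obtain ⟨ha0, haB, hE0, heX⟩ := key X hXself
  refine ⟨max (bigB p ρ C0) (smallE p ρ C0)⁻¹, fun X' hX' => ?_⟩
  obtain ⟨ha0', haB', -, heX'⟩ := key X' hX'
  refine max_le ?_ ?_
  · refine le_trans ?_ (le_max_left _ _)
    rw [abs_le]
    constructor <;> linarith
  · refine le_trans ?_ (le_max_right _ _)
    have hbx : 0 < minEig (Θhat X) := lt_of_lt_of_le hE0 heX
    have hbx' : 0 < minEig (Θhat X') := lt_of_lt_of_le hE0 heX'
    have hix : (minEig (Θhat X))⁻¹ ≤ (smallE p ρ C0)⁻¹ := inv_anti₀ hE0 heX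
    have hix' : (minEig (Θhat X'))⁻¹ ≤ (smallE p ρ C0)⁻¹ := inv_anti₀ hE0 heX'
    have hpx : 0 < (minEig (Θhat X))⁻¹ := inv_pos.mpr hbx
    have hpx' : 0 < (minEig (Θhat X'))⁻¹ := inv_pos.mpr hbx'
    rw [abs_le]
    constructor <;> linarith
end

section
/- Let n, p ≥ 1 and m ∈ {0,…,n}. Let scale : ℝⁿ → ℝ be a nonnegative function and let r : ℝⁿ × ℝⁿ → ℝ satisfy |r(u,v)| ≤ 1 and r(u,v) = r(v,u) for all u, v ∈ ℝⁿ. For X ∈ ℝ^{n×p} with columns x¹,…,x^p, define the pairwise-correlation-based covariance matrix S(X) by S(X)_{jk} = scale(x^j)·scale(x^k)·r(x^j, x^k). Fix X ∈ ℝ^{n×p}. If for every j ∈ {1,…,p} there exists a finite constant M_j such that scale(x') ≤ M_j for every vector x' ∈ ℝⁿ that differs from x^j in at most m entries, then there exists a finite constant M such that |λ₁(S(X')) − λ₁(S(X))| ≤ M for every m-cellwise corruption X' of X. (This is the content of Proposition 1: the explosion breakdown point under cellwise contamination of the covariance estimator based on pairwise correlations is at least that of the univariate scale estimator used.) -/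
open Matrix

lemma eig_bound {p : ℕ} (A : Matrix (Fin p) (Fin p) ℝ) (B : ℝ)
    (hB : ∀ j k, |A j k| ≤ B) {μ : ℝ} {v : Fin p → ℝ} (hv : v ≠ 0)
    (hev : A.mulVec v = μ • v) : |μ| ≤ p * B := by
  have hpne : (Finset.univ : Finset (Fin p)).Nonempty := by
    rcases Function.ne_iff.mp hv with ⟨i, _⟩
    exact ⟨i, Finset.mem_univ i⟩
  obtain ⟨i, -, hi⟩ := Finset.exists_max_image Finset.univ (fun i => |v i|) hpne
  have hvi : 0 < |v i| := by
    rcases Function.ne_iff.mp hv with ⟨k, hk⟩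
    have := hi k (Finset.mem_univ k)
    have : 0 < |v k| := abs_pos.mpr hk
    linarith [hi k (Finset.mem_univ k)]
  have key : |μ| * |v i| ≤ (p * B) * |v i| := by
    have h1 : |μ * v i| = |(A.mulVec v) i| := by rw [hev]; simp [abs_mul]
    have h2 : |(A.mulVec v) i| ≤ ∑ k, |A i k * v k| := by
      rw [Matrix.mulVec, dotProduct]
      exact Finset.abs_sum_le_sum_abs _ _
    have h3 : ∑ k, |A i k * v k| ≤ ∑ _k : Fin p, B * |v i| := by
      apply Finset.sum_le_sum
      intro k _
      rw [abs_mul]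
      exact mul_le_mul (hB i k) (hi k (Finset.mem_univ k)) (abs_nonneg _) (le_trans (abs_nonneg _) (hB i k))
    have h4 : ∑ _k : Fin p, B * |v i| = (p * B) * |v i| := by
      simp [Finset.sum_const, mul_assoc, mul_comm]
      ring
    calc |μ| * |v i| = |μ * v i| := (abs_mul _ _).symm
      _ = |(A.mulVec v) i| := h1
      _ ≤ ∑ k, |A i k * v k| := h2
      _ ≤ (p * B) * |v i| := h4 ▸ h3
  exact le_of_mul_le_mul_right key hvi

lemma maxEig_bound {p : ℕ} (hp : 1 ≤ p) (A : Matrix (Fin p) (Fin p) ℝ)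
    (hA : A.IsHermitian) (B : ℝ) (hB : ∀ j k, |A j k| ≤ B) :
    |maxEig A| ≤ p * B := by
  have hplt : 0 < p := hp
  set E : Set ℝ := {μ : ℝ | ∃ v : Fin p → ℝ, v ≠ 0 ∧ A.mulVec v = μ • v} with hE
  have hne : E.Nonempty := by
    refine ⟨hA.eigenvalues ⟨0, hplt⟩, ⇑(hA.eigenvectorBasis ⟨0, hplt⟩),
      fun h0 => hA.eigenvectorBasis.orthonormal.ne_zero _ (by simpa using h0), hA.mulVec_eigenvectorBasis _⟩
  have hbdd : ∀ μ ∈ E, |μ| ≤ p * B := by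
    rintro μ ⟨v, hv, hev⟩
    exact eig_bound A B hB hv hev
  have hub : ∀ μ ∈ E, μ ≤ p * B := fun μ hμ => (abs_le.mp (hbdd μ hμ)).2
  have hba : BddAbove E := ⟨p * B, hub⟩
  rw [abs_le]
  constructor
  · obtain ⟨μ, hμ⟩ := hne
    have := le_csSup hba hμ
    have := (abs_le.mp (hbdd μ hμ)).1
    unfold maxEig
    linarith
  · exact csSup_le hne hub

theorem pairwise_correlation_cov_breakdown
    (n p : ℕ) (hn : 1 ≤ n) (hp : 1 ≤ p) (m : ℕ) (hm : m ≤ n)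
    (scale : (Fin n → ℝ) → ℝ) (hscale : ∀ u, 0 ≤ scale u)
    (r : (Fin n → ℝ) → (Fin n → ℝ) → ℝ)
    (hr1 : ∀ u v, |r u v| ≤ 1) (hr2 : ∀ u v, r u v = r v u)
    (S : Matrix (Fin n) (Fin p) ℝ → Matrix (Fin p) (Fin p) ℝ)
    (hSdef : ∀ (X : Matrix (Fin n) (Fin p) ℝ) (j k : Fin p),
      S X j k = scale (fun i => X i j) * scale (fun i => X i k) *
        r (fun i => X i j) (fun i => X i k))
    (X : Matrix (Fin n) (Fin p) ℝ)
    (h : ∀ j : Fin p, ∃ Mj : ℝ, ∀ x' : Fin n → ℝ,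
      {i : Fin n | x' i ≠ X i j}.ncard ≤ m → scale x' ≤ Mj) :
    ∃ M : ℝ, ∀ X', CellwiseCorruption m X X' →
      |maxEig (S X') - maxEig (S X)| ≤ M := by
  choose Mf hMf using h
  have hpne : (Finset.univ : Finset (Fin p)).Nonempty := ⟨⟨0, hp⟩, Finset.mem_univ _⟩
  set C : ℝ := max (Finset.univ.sup' hpne Mf) 0 with hC
  have hC0 : 0 ≤ C := le_max_right _ _
  -- every corruption column has scale ≤ C
  have hcol : ∀ (X' : Matrix (Fin n) (Fin p) ℝ), CellwiseCorruption m X X' →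
      ∀ j, scale (fun i => X' i j) ≤ C := by
    intro X' hX' j
    have := hMf j (fun i => X' i j) (hX' j)
    exact le_trans this (le_trans (Finset.le_sup' Mf (Finset.mem_univ j)) (le_max_left _ _))
  -- entry bound
  have hent : ∀ (X' : Matrix (Fin n) (Fin p) ℝ), CellwiseCorruption m X X' →
      ∀ j k, |S X' j k| ≤ C * C := by
    intro X' hX' j k
    rw [hSdef]
    rw [abs_mul, abs_mul]
    have h1 := hcol X' hX' j
    have h2 := hcol X' hX' k
    have := hr1 (fun i => X' i j) (fun i => X' i k)
    calc |scale fun i => X' i j| * |scale fun i => X' i k| * |r (fun i => X' i j) fun i => X' i k|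
        ≤ |scale fun i => X' i j| * |scale fun i => X' i k| * 1 :=
          mul_le_mul_of_nonneg_left this (mul_nonneg (abs_nonneg _) (abs_nonneg _))
      _ = |scale fun i => X' i j| * |scale fun i => X' i k| := mul_one _
      _ ≤ C * C := by
          rw [abs_of_nonneg (hscale _), abs_of_nonneg (hscale _)]
          exact mul_le_mul h1 h2 (hscale _) hC0
  -- Hermitian
  have herm : ∀ (X' : Matrix (Fin n) (Fin p) ℝ), (S X').IsHermitian := by
    intro X'
    ext j k
    simp only [conjTranspose_apply, star_trivial]
    rw [hSdef, hSdef, hr2]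
    ring
  have hself : CellwiseCorruption m X X := by
    intro j
    simp [Set.ncard_eq_zero]
  refine ⟨2 * (p * (C * C)), fun X' hX' => ?_⟩
  have b1 := maxEig_bound hp (S X') (herm X') (C * C) (hent X' hX')
  have b2 := maxEig_bound hp (S X) (herm X) (C * C) (hent X hself)
  rw [abs_le] at b1 b2 ⊢
  constructor <;> linarith
end

section
/- Let p ≥ 1, ρ > 0, let S ∈ ℝ^{p×p} be symmetric positive semidefinite, let E ∈ ℝ^{p×p} be symmetric with |E_{jk}| ≤ 1 for all j, k, and let Θ ∈ ℝ^{p×p} be symmetric positive definite such that (S + ρE)·Θ = I_p. Then λ_p(Θ)⁻¹ ≤ λ₁(S) + ρp, i.e. the smallest eigenvalue of Θ satisfies λ_p(Θ) ≥ 1/(λ₁(S) + ρp). -/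
open Matrix

lemma eigSet_eq {p : ℕ} {A : Matrix (Fin p) (Fin p) ℝ} (hA : A.IsHermitian) :
    {μ : ℝ | ∃ v : Fin p → ℝ, v ≠ 0 ∧ A.mulVec v = μ • v} = Set.range hA.eigenvalues := by
  rw [← hA.spectrum_real_eq_range_eigenvalues,
    ← AlgEquiv.spectrum_eq (Matrix.toLinAlgEquiv' : Matrix (Fin p) (Fin p) ℝ ≃ₐ[ℝ] _) A]
  ext μ
  rw [Set.mem_setOf_eq, ← Module.End.hasEigenvalue_iff_mem_spectrum]
  constructor
  · rintro ⟨v, hv, hAv⟩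
    exact Module.End.hasEigenvalue_of_hasEigenvector
      ⟨Module.End.mem_eigenspace_iff.mpr (by simpa using hAv), hv⟩
  · rintro h
    obtain ⟨v, hv⟩ := h.exists_hasEigenvector
    exact ⟨v, hv.2, by simpa using Module.End.mem_eigenspace_iff.mp hv.1⟩

lemma rayleigh_le {p : ℕ} {S : Matrix (Fin p) (Fin p) ℝ} (hS : S.IsHermitian)
    {c : ℝ} (hc : ∀ i, hS.eigenvalues i ≤ c) (v : Fin p → ℝ) :
    v ⬝ᵥ S.mulVec v ≤ c * (v ⬝ᵥ v) := by
  set U : Matrix (Fin p) (Fin p) ℝ := (hS.eigenvectorUnitary : Matrix (Fin p) (Fin p) ℝ)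
  have hU1 : U * star U = 1 := Matrix.mem_unitaryGroup_iff.mp hS.eigenvectorUnitary.2
  have hM : (c • (1 : Matrix (Fin p) (Fin p) ℝ) - S).PosSemidef := by
    have hdiag : (Matrix.PosSemidef (diagonal (fun i => c - hS.eigenvalues i))) :=
      Matrix.posSemidef_diagonal_iff.mpr fun i => sub_nonneg.mpr (hc i)
    have := hdiag.mul_mul_conjTranspose_same U
    have key : U * diagonal (fun i => c - hS.eigenvalues i) * Uᴴ
        = c • (1 : Matrix (Fin p) (Fin p) ℝ) - S := by
      have hdd : diagonal (fun i => c - hS.eigenvalues i)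
          = c • (1 : Matrix (Fin p) (Fin p) ℝ)
            - diagonal (RCLike.ofReal ∘ hS.eigenvalues) := by
        ext i j
        rcases eq_or_ne i j with rfl|h
        · simp
        · simp [h]
      rw [hdd, Matrix.mul_sub, Matrix.sub_mul]
      congr 1
      · rw [Matrix.mul_smul, Matrix.smul_mul, mul_one, ← Matrix.star_eq_conjTranspose, hU1]
      · exact (hS.spectral_theorem).symm
    rwa [key] at this
  have h0 := hM.dotProduct_mulVec_nonneg v
  have hsv : star v = v := by simp
  rw [hsv, Matrix.sub_mulVec, Matrix.smul_mulVec, Matrix.one_mulVec,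
    dotProduct_sub, dotProduct_smul, smul_eq_mul] at h0
  linarith [h0]

theorem smallest_eigenvalue_bound_from_FOC
    (p : ℕ) (hp : 1 ≤ p) (ρ : ℝ) (hρ : 0 < ρ)
    (S : Matrix (Fin p) (Fin p) ℝ) (hS : S.PosSemidef)
    (E : Matrix (Fin p) (Fin p) ℝ) (hEsymm : E.IsSymm) (hE : ∀ j k, |E j k| ≤ 1)
    (Θ : Matrix (Fin p) (Fin p) ℝ) (hΘ : Θ.PosDef)
    (hFOC : (S + ρ • E) * Θ = 1) :
    (minEig Θ)⁻¹ ≤ maxEig S + ρ * p := by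
  have hpne : Nonempty (Fin p) := ⟨⟨0, hp⟩⟩
  have hΘH : Θ.IsHermitian := hΘ.isHermitian
  -- minEig Θ is an eigenvalue of Θ
  have hmem : minEig Θ ∈ Set.range hΘH.eigenvalues := by
    rw [minEig, eigSet_eq hΘH]
    exact Set.Nonempty.csInf_mem (Set.range_nonempty _) (Set.finite_range _)
  obtain ⟨i, hi⟩ := hmem
  set μ := minEig Θ with hμdef
  have hμpos : 0 < μ := hi ▸ hΘ.eigenvalues_pos i
  set v : Fin p → ℝ := ⇑(hΘH.eigenvectorBasis i) with hvdef
  have hvne : v ≠ 0 := by simpa [hvdef] using hΘH.eigenvectorBasis.orthonormal.ne_zero i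
  have hΘv : Θ *ᵥ v = μ • v := by rw [hΘH.mulVec_eigenvectorBasis i, hi]
  -- v is an eigenvector of S + ρ•E with eigenvalue μ⁻¹
  have hAv : (S + ρ • E) *ᵥ v = μ⁻¹ • v := by
    have h1 : (S + ρ • E) *ᵥ (Θ *ᵥ v) = v := by
      rw [Matrix.mulVec_mulVec, hFOC, Matrix.one_mulVec]
    rw [hΘv, Matrix.mulVec_smul] at h1
    have h2 : μ⁻¹ • (μ • ((S + ρ • E) *ᵥ v)) = μ⁻¹ • v := by rw [h1]
    rwa [smul_smul, inv_mul_cancel₀ hμpos.ne', one_smul] at h2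
  have hvv : 0 < v ⬝ᵥ v := by
    obtain ⟨j, hj⟩ := Function.ne_iff.mp hvne
    rw [dotProduct]
    exact Finset.sum_pos' (fun k _ => mul_self_nonneg _)
      ⟨j, Finset.mem_univ j, mul_self_pos.mpr (by simpa using hj)⟩
  -- dot product identity
  have hdot : v ⬝ᵥ S.mulVec v + ρ * (v ⬝ᵥ E.mulVec v) = μ⁻¹ * (v ⬝ᵥ v) := by
    have h := congrArg (fun w => v ⬝ᵥ w) hAv
    simpa [Matrix.add_mulVec, Matrix.smul_mulVec, dotProduct_add, dotProduct_smul,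
      smul_eq_mul] using h
  -- Rayleigh bound for S
  have hSH : S.IsHermitian := hS.isHermitian
  have hSc : ∀ j, hSH.eigenvalues j ≤ maxEig S := by
    intro j
    rw [maxEig, eigSet_eq hSH]
    exact le_csSup (Set.finite_range _).bddAbove ⟨j, rfl⟩
  have hSbound := rayleigh_le hSH hSc v
  -- E bound
  have hEbound : v ⬝ᵥ E.mulVec v ≤ (p : ℝ) * (v ⬝ᵥ v) := by
    have h1 : v ⬝ᵥ E.mulVec v ≤ ∑ j, ∑ k, |v j| * |v k| := by
      rw [dotProduct]
      refine Finset.sum_le_sum fun j _ => ?_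
      rw [Matrix.mulVec, dotProduct, Finset.mul_sum]
      refine Finset.sum_le_sum fun k _ => ?_
      calc v j * (E j k * v k) ≤ |v j * (E j k * v k)| := le_abs_self _
        _ = |v j| * (|E j k| * |v k|) := by rw [abs_mul, abs_mul]
        _ ≤ |v j| * (1 * |v k|) := by
            have := hE j k
            have h0 : (0:ℝ) ≤ |v j| := abs_nonneg _
            have h0' : (0:ℝ) ≤ |v k| := abs_nonneg _
            exact mul_le_mul_of_nonneg_left (mul_le_mul_of_nonneg_right this h0') h0
        _ = |v j| * |v k| := by ring
    have h2 : (∑ j, ∑ k, |v j| * |v k|) = (∑ j, |v j|) ^ 2 := by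
      rw [sq, Finset.sum_mul_sum]
    have h3 : (∑ j, |v j|) ^ 2 ≤ ((Finset.univ : Finset (Fin p)).card : ℝ) * ∑ j, |v j| ^ 2 :=
      sq_sum_le_card_mul_sum_sq
    have h4 : (∑ j, |v j| ^ 2) = v ⬝ᵥ v := by
      rw [dotProduct]
      exact Finset.sum_congr rfl fun j _ => by rw [sq_abs, sq]
    rw [h4] at h3
    rw [Finset.card_univ, Fintype.card_fin] at h3
    linarith
  -- combine
  have hfinal : μ⁻¹ * (v ⬝ᵥ v) ≤ (maxEig S + ρ * p) * (v ⬝ᵥ v) := by nlinarith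
  exact le_of_mul_le_mul_right (by linarith) hvv
end

section
/- Let p ≥ 1, ρ > 0, let S ∈ ℝ^{p×p} be symmetric positive semidefinite, and let Θ̂ be a symmetric positive definite p×p matrix that maximizes the GLASSO objective Q_S(Θ) = log det Θ − tr(SΘ) − ρ ∑_{j,k=1}^p |Θ_{jk}| over all symmetric positive definite p×p matrices. Then p · log λ₁(Θ̂) − (ρ/p) · λ₁(Θ̂) ≥ −tr(S) − ρp. -/
open Matrix

lemma maxEig_eq {p : ℕ} {Θhat : Matrix (Fin p) (Fin p) ℝ}
    (hH : Θhat.IsHermitian) :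
    {μ : ℝ | ∃ v : Fin p → ℝ, v ≠ 0 ∧ Θhat.mulVec v = μ • v}
      = Set.range hH.eigenvalues := by
  ext μ
  constructor
  · rintro ⟨v, hv, hvec⟩
    have hev : Module.End.HasEigenvalue (Matrix.toLin' Θhat) μ :=
      Module.End.hasEigenvalue_of_hasEigenvector
        ⟨Module.End.mem_eigenspace_iff.mpr (by simpa [Matrix.toLin'_apply] using hvec), hv⟩
    have hspec : μ ∈ spectrum ℝ Θhat := by
      rw [← AlgEquiv.spectrum_eq (Matrix.toLinAlgEquiv (Pi.basisFun ℝ (Fin p)))]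
      exact Module.End.hasEigenvalue_iff_mem_spectrum.mp hev
    rwa [hH.spectrum_real_eq_range_eigenvalues] at hspec
  · rintro ⟨i, rfl⟩
    refine ⟨⇑(hH.eigenvectorBasis i), ?_, hH.mulVec_eigenvectorBasis i⟩
    have := hH.eigenvectorBasis.toBasis.ne_zero i
    simpa using this

lemma trace_mul_nonneg {p : ℕ} {S Θ : Matrix (Fin p) (Fin p) ℝ}
    (hS : S.PosSemidef) (hΘ : Θ.PosSemidef) : 0 ≤ (S * Θ).trace := by
  obtain ⟨R, hRps, hRS⟩ : ∃ R : Matrix (Fin p) (Fin p) ℝ, R.PosSemidef ∧ R * R = S :=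
    by open scoped MatrixOrder in
      exact ⟨CFC.sqrt S, (CFC.sqrt_nonneg S).posSemidef, CFC.sqrt_mul_sqrt_self S hS.nonneg⟩
  have hM : (R * Θ * R).PosSemidef := by
    have := hΘ.conjTranspose_mul_mul_same R
    rwa [hRps.1.eq] at this
  have htr : (S * Θ).trace = (R * Θ * R).trace := by
    calc (S * Θ).trace = (R * R * Θ).trace := by rw [hRS]
    _ = (R * Θ * R).trace := by
        rw [mul_assoc, Matrix.trace_mul_comm, mul_assoc]
  rw [htr, Matrix.trace]
  apply Finset.sum_nonneg
  intro i _
  simpa using hM.diag_nonneg (i := i)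

theorem glasso_maximizer_lower_bound
    (p : ℕ) (hp : 1 ≤ p) (ρ : ℝ) (hρ : 0 < ρ)
    (S : Matrix (Fin p) (Fin p) ℝ) (hS : S.PosSemidef)
    (Θhat : Matrix (Fin p) (Fin p) ℝ) (hΘ : Θhat.PosDef)
    (hmax : ∀ Θ : Matrix (Fin p) (Fin p) ℝ, Θ.PosDef →
      glassoObj ρ S Θ ≤ glassoObj ρ S Θhat) :
    -S.trace - ρ * p ≤ p * Real.log (maxEig Θhat) - ρ / p * maxEig Θhat := by
  haveI : Nonempty (Fin p) := ⟨⟨0, hp⟩⟩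
  have hH := hΘ.1
  have hset := maxEig_eq hH
  set E := {μ : ℝ | ∃ v : Fin p → ℝ, v ≠ 0 ∧ Θhat.mulVec v = μ • v} with hE
  have hfin : E.Finite := hset ▸ Set.finite_range _
  have hne : E.Nonempty := hset ▸ Set.range_nonempty _
  set lam := maxEig Θhat with hlam
  have hmem : lam ∈ E := hne.csSup_mem hfin
  obtain ⟨i0, hi0⟩ : ∃ i, hH.eigenvalues i = lam := by rwa [hset] at hmem
  have hle : ∀ i, hH.eigenvalues i ≤ lam := fun i =>
    le_csSup hfin.bddAbove (by rw [← hE, hset]; exact Set.mem_range_self i)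
  have hpos : ∀ i, 0 < hH.eigenvalues i := fun i => hΘ.eigenvalues_pos i
  have hlampos : 0 < lam := hi0 ▸ hpos i0
  -- log det bound
  have hdet : Θhat.det = ∏ i, hH.eigenvalues i := by
    simpa using hH.det_eq_prod_eigenvalues
  have hlogdet : Real.log Θhat.det ≤ p * Real.log lam := by
    rw [hdet, Real.log_prod (fun i _ => (hpos i).ne')]
    calc ∑ i, Real.log (hH.eigenvalues i) ≤ ∑ _i : Fin p, Real.log lam :=
          Finset.sum_le_sum fun i _ =>
            Real.log_le_log (hpos i) (hle i)
    _ = p * Real.log lam := by simp [mul_comm]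
  -- lam ≤ sum of abs entries
  have habs : lam ≤ ∑ j, ∑ k, |Θhat j k| := by
    set u : Fin p → ℝ := ⇑(hH.eigenvectorBasis i0) with hu
    have huvec : Θhat.mulVec u = lam • u := hi0 ▸ hH.mulVec_eigenvectorBasis i0
    have hnorm : ‖hH.eigenvectorBasis i0‖ = 1 := hH.eigenvectorBasis.orthonormal.1 i0
    have hsum : ∑ j, u j ^ 2 = 1 := by
      have h1 : ‖hH.eigenvectorBasis i0‖ ^ 2 = 1 := by rw [hnorm]; norm_num
      rw [EuclideanSpace.norm_eq] at h1
      rw [Real.sq_sqrt (by positivity)] at h1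
      simpa [hu, sq_abs] using h1
    have hub : ∀ j, |u j| ≤ 1 := by
      intro j
      have hsq : u j ^ 2 ≤ 1 := hsum ▸
        Finset.single_le_sum (fun k _ => sq_nonneg (u k)) (Finset.mem_univ j)
      nlinarith [abs_nonneg (u j), sq_abs (u j)]
    have hray : lam = u ⬝ᵥ Θhat.mulVec u := by
      rw [huvec, dotProduct_smul]
      have : u ⬝ᵥ u = ∑ j, u j ^ 2 := by simp [dotProduct, sq]
      simp [this, hsum]
    rw [hray]
    calc u ⬝ᵥ Θhat.mulVec u = ∑ j, ∑ k, u j * (Θhat j k * u k) := by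
          simp [dotProduct, Matrix.mulVec, Finset.mul_sum]
    _ ≤ ∑ j, ∑ k, |Θhat j k| := by
        apply Finset.sum_le_sum; intro j _
        apply Finset.sum_le_sum; intro k _
        calc u j * (Θhat j k * u k) ≤ |u j * (Θhat j k * u k)| := le_abs_self _
        _ = |u j| * |Θhat j k| * |u k| := by rw [abs_mul, abs_mul]; ring
        _ ≤ 1 * |Θhat j k| * 1 := by
            apply mul_le_mul (mul_le_mul (hub j) le_rfl (abs_nonneg _) (by norm_num)) (hub k)
              (abs_nonneg _)
            positivity
        _ = |Θhat j k| := by ring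
  -- objective at identity
  have hQ1 : glassoObj ρ S (1 : Matrix (Fin p) (Fin p) ℝ) = -S.trace - ρ * p := by
    simp only [glassoObj, Matrix.det_one, Real.log_one, mul_one, Matrix.one_apply]
    have : ∑ j : Fin p, ∑ k : Fin p, |(if j = k then (1:ℝ) else 0)| = p := by
      simp [Finset.sum_ite_eq, apply_ite abs]
    rw [this]; ring
  have hchain := hmax 1 Matrix.PosDef.one
  rw [hQ1] at hchain
  have htrS : 0 ≤ (S * Θhat).trace := trace_mul_nonneg hS hΘ.posSemidef
  have hQhat : glassoObj ρ S Θhat ≤ p * Real.log lam - ρ / p * lam := by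
    unfold glassoObj
    have h1 : ρ / p * lam ≤ ρ * lam := by
      apply mul_le_mul_of_nonneg_right _ hlampos.le
      rw [div_le_iff₀ (by exact_mod_cast hp : (0:ℝ) < p)]
      nlinarith [(by exact_mod_cast hp : (1:ℝ) ≤ p)]
    have h2 : ρ * lam ≤ ρ * ∑ j, ∑ k, |Θhat j k| :=
      mul_le_mul_of_nonneg_left habs hρ.le
    linarith
  linarith
end

section
/- Let p ≥ 1, ρ > 0 and B ≥ 0. Then there exists a finite constant M* (depending only on p, ρ and B) such that for every symmetric positive semidefinite matrix S ∈ ℝ^{p×p} with λ₁(S) ≤ B and every symmetric positive definite p×p matrix Θ̂ maximizing the GLASSO objective Q_S(Θ) = log det Θ − tr(SΘ) − ρ ∑_{j,k=1}^p |Θ_{jk}| over all symmetric positive definite p×p matrices, one has λ₁(Θ̂) ≤ M*. -/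
open Matrix

/-- Any real eigenvalue of a matrix is at most the sum of absolute values of entries. -/
lemma eig_le_entrySum {p : ℕ} (A : Matrix (Fin p) (Fin p) ℝ) (μ : ℝ) (v : Fin p → ℝ)
    (hv : v ≠ 0) (he : A.mulVec v = μ • v) : μ ≤ ∑ j, ∑ k, |A j k| := by
  set n : ℝ := ∑ i, v i * v i with hn
  have hn0 : 0 < n := by
    obtain ⟨i, hi⟩ := Function.ne_iff.mp hv
    exact Finset.sum_pos' (fun i _ => mul_self_nonneg _)
      ⟨i, Finset.mem_univ i, mul_self_pos.mpr hi⟩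
  have hsq : ∀ i, v i * v i ≤ n := fun i =>
    Finset.single_le_sum (f := fun i => v i * v i) (fun i _ => mul_self_nonneg _)
      (Finset.mem_univ i)
  have habs : ∀ j k, |v j| * |v k| ≤ n := by
    intro j k
    nlinarith [hsq j, hsq k, sq_nonneg (|v j| - |v k|), abs_nonneg (v j), abs_nonneg (v k),
      sq_abs (v j), sq_abs (v k)]
  have key : μ * n ≤ (∑ j, ∑ k, |A j k|) * n := by
    have h1 : v ⬝ᵥ A.mulVec v = μ * n := by
      rw [he]
      simp only [dotProduct, Pi.smul_apply, smul_eq_mul, hn, Finset.mul_sum]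
      congr 1; ext i; ring
    have h2 : v ⬝ᵥ A.mulVec v = ∑ j, ∑ k, v j * (A j k * v k) := by
      simp [dotProduct, mulVec, Finset.mul_sum]
    have h3 : ∀ j k, v j * (A j k * v k) ≤ |A j k| * n := by
      intro j k
      calc v j * (A j k * v k) ≤ |v j * (A j k * v k)| := le_abs_self _
        _ = |A j k| * (|v j| * |v k|) := by rw [abs_mul, abs_mul]; ring
        _ ≤ |A j k| * n := mul_le_mul_of_nonneg_left (habs j k) (abs_nonneg _)
    calc μ * n = ∑ j, ∑ k, v j * (A j k * v k) := by rw [← h1, h2]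
      _ ≤ ∑ j, ∑ k, |A j k| * n :=
        Finset.sum_le_sum fun j _ => Finset.sum_le_sum fun k _ => h3 j k
      _ = (∑ j, ∑ k, |A j k|) * n := by rw [Finset.sum_mul]; congr 1; ext j; rw [Finset.sum_mul]
  exact le_of_mul_le_mul_right key hn0

lemma entrySum_nonneg {p : ℕ} (A : Matrix (Fin p) (Fin p) ℝ) :
    0 ≤ ∑ j, ∑ k, |A j k| :=
  Finset.sum_nonneg fun j _ => Finset.sum_nonneg fun k _ => abs_nonneg _

lemma maxEig_le_entrySum {p : ℕ} (A : Matrix (Fin p) (Fin p) ℝ) :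
    maxEig A ≤ ∑ j, ∑ k, |A j k| := by
  apply Real.sSup_le _ (entrySum_nonneg A)
  rintro μ ⟨v, hv, he⟩
  exact eig_le_entrySum A μ v hv he

lemma eigSet_bddAbove_s10 {p : ℕ} (A : Matrix (Fin p) (Fin p) ℝ) :
    BddAbove {μ : ℝ | ∃ v : Fin p → ℝ, v ≠ 0 ∧ A.mulVec v = μ • v} :=
  ⟨∑ j, ∑ k, |A j k|, fun μ ⟨v, hv, he⟩ => eig_le_entrySum A μ v hv he⟩

lemma eigenvalue_mem {p : ℕ} {A : Matrix (Fin p) (Fin p) ℝ} (hA : A.IsHermitian) (i : Fin p) :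
    hA.eigenvalues i ∈ {μ : ℝ | ∃ v : Fin p → ℝ, v ≠ 0 ∧ A.mulVec v = μ • v} := by
  refine ⟨⇑(hA.eigenvectorBasis i), ?_, hA.mulVec_eigenvectorBasis i⟩
  have := hA.eigenvectorBasis.orthonormal.ne_zero i
  intro h
  apply this
  ext j
  exact congrFun h j

lemma eigenvalue_le_maxEig {p : ℕ} {A : Matrix (Fin p) (Fin p) ℝ} (hA : A.IsHermitian)
    (i : Fin p) : hA.eigenvalues i ≤ maxEig A :=
  le_csSup (eigSet_bddAbove_s10 A) (eigenvalue_mem hA i)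

lemma trace_eq_sum_eig {p : ℕ} {A : Matrix (Fin p) (Fin p) ℝ} (hA : A.IsHermitian) :
    A.trace = ∑ i, hA.eigenvalues i := by
  conv_lhs => rw [hA.spectral_theorem]
  rw [Unitary.conjStarAlgAut_apply, trace_mul_cycle]
  rw [show (star (hA.eigenvectorUnitary : Matrix (Fin p) (Fin p) ℝ)) *
      (hA.eigenvectorUnitary : Matrix (Fin p) (Fin p) ℝ) = 1 from
    mem_unitaryGroup_iff'.mp hA.eigenvectorUnitary.2]
  simp [trace_diagonal]

theorem glasso_maximizer_largest_eigenvalue_bounded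
    (p : ℕ) (hp : 1 ≤ p) (ρ : ℝ) (hρ : 0 < ρ) (B : ℝ) (hB : 0 ≤ B) :
    ∃ Mstar : ℝ, ∀ S : Matrix (Fin p) (Fin p) ℝ, S.PosSemidef → maxEig S ≤ B →
      ∀ Θhat : Matrix (Fin p) (Fin p) ℝ, Θhat.PosDef →
        (∀ Θ : Matrix (Fin p) (Fin p) ℝ, Θ.PosDef →
          glassoObj ρ S Θ ≤ glassoObj ρ S Θhat) →
        maxEig Θhat ≤ Mstar := by
  have hpR : (0:ℝ) < p := by exact_mod_cast hp
  set a : ℝ := 2 * p / ρ with ha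
  have ha0 : 0 < a := by positivity
  refine ⟨(2 / ρ) * (p * Real.log a + p * B + ρ * p), ?_⟩
  intro S hS hSB Θhat hΘ hopt
  set E : ℝ := ∑ j, ∑ k, |Θhat j k| with hE
  -- E > 0
  have hE0 : 0 < E := by
    have h1 : hΘ.1.eigenvalues ⟨0, hp⟩ ≤ E :=
      eig_le_entrySum Θhat _ _ (by
        have := hΘ.1.eigenvectorBasis.orthonormal.ne_zero ⟨0, hp⟩
        intro h; apply this; ext j; exact congrFun h j) (hΘ.1.mulVec_eigenvectorBasis ⟨0, hp⟩)
    exact lt_of_lt_of_le (hΘ.eigenvalues_pos ⟨0, hp⟩) h1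
  -- trace S ≤ p * B
  have htrS : S.trace ≤ p * B := by
    rw [trace_eq_sum_eig hS.1]
    calc ∑ i, hS.1.eigenvalues i ≤ ∑ _i : Fin p, B :=
          Finset.sum_le_sum fun i _ => le_trans (eigenvalue_le_maxEig hS.1 i) hSB
      _ = p * B := by simp [mul_comm]
  -- trace (S * Θhat) ≥ 0
  have htrSΘ : 0 ≤ (S * Θhat).trace := by
    have hpsd := hΘ.posSemidef
    obtain ⟨C, hC⟩ : ∃ C, Θhat = Cᴴ * C :=
      by open scoped MatrixOrder in exact CStarAlgebra.nonneg_iff_eq_star_mul_self.mp hpsd.nonneg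
    rw [hC, ← mul_assoc, trace_mul_cycle]
    have : (C * S * Cᴴ).PosSemidef := hS.mul_mul_conjTranspose_same C
    calc (0:ℝ) = ∑ i : Fin p, (0:ℝ) := by simp
      _ ≤ ∑ i, (C * S * Cᴴ) i i := Finset.sum_le_sum fun i _ => by
          have h := this.diag_nonneg (i := i)
          simpa [dotProduct, mulVec, Pi.single_apply, Finset.sum_ite_eq] using h
      _ = (C * S * Cᴴ).trace := rfl
  -- det Θhat ≤ E ^ p
  have hdet : Θhat.det ≤ E ^ p := by
    have h1 : Θhat.det = ∏ i, hΘ.1.eigenvalues i := by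
      have := hΘ.1.det_eq_prod_eigenvalues
      push_cast at this
      exact this
    rw [h1]
    calc ∏ i, hΘ.1.eigenvalues i ≤ ∏ _i : Fin p, E := by
          apply Finset.prod_le_prod
          · exact fun i _ => (hΘ.eigenvalues_pos i).le
          · exact fun i _ => eig_le_entrySum Θhat _ _ (by
              have := hΘ.1.eigenvectorBasis.orthonormal.ne_zero i
              intro h; apply this; ext j; exact congrFun h j)
              (hΘ.1.mulVec_eigenvectorBasis i)
      _ = E ^ p := by simp
  have hlogdet : Real.log Θhat.det ≤ p * Real.log E :=
    le_trans (Real.log_le_log hΘ.det_pos hdet)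
      (by rw [Real.log_pow])
  -- optimality at the identity
  have hopt1 := hopt 1 Matrix.PosDef.one
  have hQ1 : glassoObj ρ S 1 = - S.trace - ρ * p := by
    unfold glassoObj
    have h1 : ∑ j : Fin p, ∑ k : Fin p, |(1 : Matrix (Fin p) (Fin p) ℝ) j k| = p := by
      simp [Matrix.one_apply, apply_ite abs]
    rw [h1]; simp
  have hQΘ : glassoObj ρ S Θhat ≤ p * Real.log E - ρ * E := by
    unfold glassoObj
    rw [← hE]
    linarith [hlogdet, htrSΘ]
  have hmain : ρ * E ≤ p * Real.log E + p * B + ρ * p := by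
    rw [hQ1] at hopt1
    have := le_trans hopt1 hQΘ
    linarith [htrS]
  -- log E ≤ E / a + log a - 1
  have hlogE : Real.log E ≤ E / a + Real.log a - 1 := by
    have h1 : Real.log (E / a) ≤ E / a - 1 := Real.log_le_sub_one_of_pos (by positivity)
    have h2 : Real.log (E / a) = Real.log E - Real.log a :=
      Real.log_div (ne_of_gt hE0) (ne_of_gt ha0)
    linarith
  have hfin : E ≤ (2 / ρ) * (p * Real.log a + p * B + ρ * p) := by
    have h3 : p * Real.log E ≤ (ρ / 2) * E + p * Real.log a - p := by
      have := mul_le_mul_of_nonneg_left hlogE hpR.le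
      have h4 : (p:ℝ) * (E / a) = (ρ / 2) * E := by
        rw [ha]; field_simp
      nlinarith
    have h5 : (ρ / 2) * E ≤ p * Real.log a + p * B + ρ * p := by linarith
    rw [div_mul_eq_mul_div, le_div_iff₀ hρ] at *
    linarith [h5]
  exact le_trans (maxEig_le_entrySum Θhat) hfin
end

section
/- Let p ≥ 1, ρ > 0, let S ∈ ℝ^{p×p} be symmetric positive semidefinite, and let Θ̂ be a symmetric positive definite p×p matrix that maximizes the GLASSO objective Q_S(Θ) = log det Θ − tr(SΘ) − ρ ∑_{j,k=1}^p |Θ_{jk}| over all symmetric positive definite p×p matrices. Then λ_p(Θ̂)⁻¹ ≤ λ₁(S) + ρp, i.e. the smallest eigenvalue of the maximizer satisfies λ_p(Θ̂) ≥ 1/(λ₁(S) + ρp). -/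
open Matrix

open Finset

section Auxiliary

variable {p : ℕ} {A : Matrix (Fin p) (Fin p) ℝ}

lemma dot_self_pos {v : Fin p → ℝ} (hv : v ≠ 0) : 0 < v ⬝ᵥ v := by
  have h0 : (0:ℝ) ≤ v ⬝ᵥ v := by
    simpa [dotProduct, ← sq] using Finset.sum_nonneg fun i _ => sq_nonneg (v i)
  rcases h0.lt_or_eq with h | h
  · exact h
  · exfalso; apply hv
    funext i
    have := (Finset.sum_eq_zero_iff_of_nonneg (fun i _ => sq_nonneg (v i))).mp
      (by simpa [dotProduct, ← sq] using h.symm) i (Finset.mem_univ i)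
    exact pow_eq_zero_iff (n := 2) (by norm_num) |>.mp this

lemma quad_repr (hA : A.IsHermitian) (v : Fin p → ℝ) :
    ∃ w : Fin p → ℝ, v ⬝ᵥ A *ᵥ v = ∑ i, hA.eigenvalues i * w i ^ 2 ∧ v ⬝ᵥ v = ∑ i, w i ^ 2 := by
  classical
  set U : Matrix (Fin p) (Fin p) ℝ := (hA.eigenvectorUnitary : Matrix (Fin p) (Fin p) ℝ) with hU
  set w : Fin p → ℝ := star U *ᵥ v with hw
  have hvU : v ᵥ* U = w := by
    funext i
    simp [hw, vecMul, mulVec, dotProduct, conjTranspose_apply, mul_comm]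
  have hUw : U *ᵥ w = v := by
    rw [hw, mulVec_mulVec, (mem_unitaryGroup_iff).mp (hA.eigenvectorUnitary).2, one_mulVec]
  refine ⟨w, ?_, ?_⟩
  · conv_lhs => rw [hA.spectral_theorem, Unitary.conjStarAlgAut_apply]
    rw [← mulVec_mulVec, ← mulVec_mulVec, dotProduct_mulVec, hvU, ← hw]
    simp [dotProduct, mulVec_diagonal]
    exact Finset.sum_congr rfl fun i _ => by ring
  · have : v ⬝ᵥ v = v ⬝ᵥ (U *ᵥ w) := by rw [hUw]
    rw [this, dotProduct_mulVec, hvU]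
    simp [dotProduct, sq]


lemma evs_nonempty (hp : 1 ≤ p) (hA : A.IsHermitian) :
    (Finset.image hA.eigenvalues Finset.univ).Nonempty :=
  ⟨hA.eigenvalues ⟨0, hp⟩, Finset.mem_image_of_mem _ (Finset.mem_univ _)⟩

lemma unit_eigvec (hA : A.IsHermitian) (i : Fin p) :
    ∃ v : Fin p → ℝ, v ≠ 0 ∧ A *ᵥ v = hA.eigenvalues i • v ∧ v ⬝ᵥ v = 1 := by
  refine ⟨(WithLp.equiv 2 _) (hA.eigenvectorBasis i), ?_, hA.mulVec_eigenvectorBasis i, ?_⟩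
  · intro h
    exact hA.eigenvectorBasis.orthonormal.ne_zero i (by simpa using h)
  · have hnorm : ‖hA.eigenvectorBasis i‖ = 1 := hA.eigenvectorBasis.orthonormal.1 i
    have h2 := congrArg (· ^ 2) hnorm
    simp only [EuclideanSpace.norm_eq, one_pow] at h2
    rw [Real.sq_sqrt (Finset.sum_nonneg fun j _ => sq_nonneg _)] at h2
    simpa [dotProduct, ← sq] using h2

lemma quad_le_max' (hp : 1 ≤ p) (hA : A.IsHermitian) (v : Fin p → ℝ) :
    v ⬝ᵥ A *ᵥ v ≤ (Finset.image hA.eigenvalues Finset.univ).max' (evs_nonempty hp hA) * (v ⬝ᵥ v) := by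
  obtain ⟨w, h1, h2⟩ := quad_repr hA v
  rw [h1, h2, Finset.mul_sum]
  exact Finset.sum_le_sum fun i _ => mul_le_mul_of_nonneg_right
    (Finset.le_max' _ _ (Finset.mem_image_of_mem _ (Finset.mem_univ i))) (sq_nonneg _)

lemma min'_le_quad (hp : 1 ≤ p) (hA : A.IsHermitian) (v : Fin p → ℝ) :
    (Finset.image hA.eigenvalues Finset.univ).min' (evs_nonempty hp hA) * (v ⬝ᵥ v) ≤ v ⬝ᵥ A *ᵥ v := by
  obtain ⟨w, h1, h2⟩ := quad_repr hA v
  rw [h1, h2, Finset.mul_sum]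
  exact Finset.sum_le_sum fun i _ => mul_le_mul_of_nonneg_right
    (Finset.min'_le _ _ (Finset.mem_image_of_mem _ (Finset.mem_univ i))) (sq_nonneg _)

lemma maxEig_eq_s11 (hp : 1 ≤ p) (hA : A.IsHermitian) :
    maxEig A = (Finset.image hA.eigenvalues Finset.univ).max' (evs_nonempty hp hA) := by
  set M := (Finset.image hA.eigenvalues Finset.univ).max' (evs_nonempty hp hA) with hM
  have hub : ∀ μ ∈ {μ : ℝ | ∃ v : Fin p → ℝ, v ≠ 0 ∧ A.mulVec v = μ • v}, μ ≤ M := by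
    rintro μ ⟨v, hv, hAv⟩
    have h1 : v ⬝ᵥ A *ᵥ v = μ * (v ⬝ᵥ v) := by rw [hAv]; simp [dotProduct_smul]
    have := quad_le_max' hp hA v
    rw [h1] at this
    exact le_of_mul_le_mul_right (by exact this) (dot_self_pos hv)
  obtain ⟨i, -, hi⟩ := Finset.mem_image.mp
    ((Finset.image hA.eigenvalues Finset.univ).max'_mem (evs_nonempty hp hA))
  obtain ⟨v, hv0, hAv, -⟩ := unit_eigvec hA i
  have hmem : M ∈ {μ : ℝ | ∃ v : Fin p → ℝ, v ≠ 0 ∧ A.mulVec v = μ • v} :=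
    ⟨v, hv0, by rw [hAv, hi]⟩
  exact le_antisymm (csSup_le ⟨M, hmem⟩ hub) (le_csSup ⟨M, hub⟩ hmem)

lemma minEig_eq (hp : 1 ≤ p) (hA : A.IsHermitian) :
    minEig A = (Finset.image hA.eigenvalues Finset.univ).min' (evs_nonempty hp hA) := by
  set M := (Finset.image hA.eigenvalues Finset.univ).min' (evs_nonempty hp hA) with hM
  have hub : ∀ μ ∈ {μ : ℝ | ∃ v : Fin p → ℝ, v ≠ 0 ∧ A.mulVec v = μ • v}, M ≤ μ := by
    rintro μ ⟨v, hv, hAv⟩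
    have h1 : v ⬝ᵥ A *ᵥ v = μ * (v ⬝ᵥ v) := by rw [hAv]; simp [dotProduct_smul]
    have := min'_le_quad hp hA v
    rw [h1] at this
    exact le_of_mul_le_mul_right (by exact this) (dot_self_pos hv)
  obtain ⟨i, -, hi⟩ := Finset.mem_image.mp
    ((Finset.image hA.eigenvalues Finset.univ).min'_mem (evs_nonempty hp hA))
  obtain ⟨v, hv0, hAv, -⟩ := unit_eigvec hA i
  have hmem : M ∈ {μ : ℝ | ∃ v : Fin p → ℝ, v ≠ 0 ∧ A.mulVec v = μ • v} :=
    ⟨v, hv0, by rw [hAv, hi]⟩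
  exact le_antisymm (csInf_le ⟨M, hub⟩ hmem) (le_csInf ⟨M, hmem⟩ hub)

lemma quad_le_maxEig (hp : 1 ≤ p) (hA : A.IsHermitian) (v : Fin p → ℝ) :
    v ⬝ᵥ A *ᵥ v ≤ maxEig A * (v ⬝ᵥ v) := by
  rw [maxEig_eq_s11 hp hA]; exact quad_le_max' hp hA v

lemma exists_unit_eigvec_minEig (hp : 1 ≤ p) (hA : A.IsHermitian) :
    ∃ v : Fin p → ℝ, v ⬝ᵥ v = 1 ∧ A *ᵥ v = minEig A • v := by
  obtain ⟨i, -, hi⟩ := Finset.mem_image.mp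
    ((Finset.image hA.eigenvalues Finset.univ).min'_mem (evs_nonempty hp hA))
  obtain ⟨v, -, hAv, hv1⟩ := unit_eigvec hA i
  exact ⟨v, hv1, by rw [hAv, hi, minEig_eq hp hA]⟩


end Auxiliary

lemma trace_mul_vecMulVec (S : Matrix (Fin p) (Fin p) ℝ) (v : Fin p → ℝ) :
    (S * vecMulVec v v).trace = v ⬝ᵥ S *ᵥ v := by
  simp only [Matrix.trace, Matrix.diag, mul_apply, vecMulVec_apply, dotProduct, mulVec,
    Finset.mul_sum]
  exact Finset.sum_congr rfl fun i _ => Finset.sum_congr rfl fun k _ => by ring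

lemma vecMulVec_mulVec (v x : Fin p → ℝ) :
    vecMulVec v v *ᵥ x = (v ⬝ᵥ x) • v := by
  funext i
  simp only [mulVec, vecMulVec_apply, dotProduct, Pi.smul_apply, smul_eq_mul, Finset.sum_mul,
    Finset.mul_sum]
  exact Finset.sum_congr rfl fun k _ => by ring

theorem glasso_maximizer_smallest_eigenvalue_bound
    (p : ℕ) (hp : 1 ≤ p) (ρ : ℝ) (hρ : 0 < ρ)
    (S : Matrix (Fin p) (Fin p) ℝ) (hS : S.PosSemidef)
    (Θhat : Matrix (Fin p) (Fin p) ℝ) (hΘ : Θhat.PosDef)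
    (hmax : ∀ Θ : Matrix (Fin p) (Fin p) ℝ, Θ.PosDef →
      glassoObj ρ S Θ ≤ glassoObj ρ S Θhat) :
    (minEig Θhat)⁻¹ ≤ maxEig S + ρ * p := by
  classical
  obtain ⟨v, hv1, hveig⟩ := exists_unit_eigvec_minEig hp hΘ.1
  set m := minEig Θhat with hm'
  set C : ℝ := maxEig S + ρ * p with hC
  have hstar : star v = v := funext fun i => star_trivial _
  have hv0 : v ≠ 0 := by
    intro h; rw [h] at hv1; simp [dotProduct] at hv1
  have hm : 0 < m := by
    have h2 := hΘ.dotProduct_mulVec_pos hv0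
    rw [hstar, hveig, dotProduct_smul, smul_eq_mul, hv1, mul_one] at h2
    exact h2
  have hq : v ⬝ᵥ S *ᵥ v ≤ maxEig S := by
    have := quad_le_maxEig hp hS.1 v
    rwa [hv1, mul_one] at this
  set q := v ⬝ᵥ S *ᵥ v with hq'
  -- ℓ¹ norm of v squared is at most p
  have hl1 : (∑ j, |v j|) * (∑ j, |v j|) ≤ (p : ℝ) := by
    have := Finset.sum_mul_sq_le_sq_mul_sq Finset.univ (fun i => |v i|) (fun _ => 1)
    simp only [mul_one, one_pow, sq_abs, Finset.sum_const, Finset.card_univ, Fintype.card_fin,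
      nsmul_eq_mul] at this
    calc (∑ j, |v j|) * (∑ j, |v j|) = (∑ j, |v j|) ^ 2 := (sq _).symm
      _ ≤ (∑ i, v i ^ 2) * p := this
      _ = (p : ℝ) := by
          have : ∑ i, v i ^ 2 = v ⬝ᵥ v := by simp [dotProduct, sq]
          rw [this, hv1, one_mul]
  -- the key inequality for every t > 0
  have key : ∀ t : ℝ, 0 < t → Real.log (1 + t / m) ≤ t * C := by
    intro t ht
    set M : Matrix (Fin p) (Fin p) ℝ := vecMulVec v v with hM
    set Θt : Matrix (Fin p) (Fin p) ℝ := Θhat + t • M with hΘt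
    have hMherm : M.IsHermitian := by
      ext i j
      simp [hM, conjTranspose_apply, vecMulVec_apply, mul_comm]
    -- positive definiteness of Θt
    have htMherm : (t • M).IsHermitian := by
      ext i j
      simp [hM, conjTranspose_apply, vecMulVec_apply, mul_comm]
    have hΘtpd : Θt.PosDef := by
      refine posDef_iff_dotProduct_mulVec.mpr ⟨?_, ?_⟩
      · exact hΘ.1.add htMherm
      · intro x hx
        have h1 := hΘ.dotProduct_mulVec_pos hx
        have hsx : star x = x := funext fun i => star_trivial _
        have h2 : star x ⬝ᵥ (t • M) *ᵥ x = t * (v ⬝ᵥ x) ^ 2 := by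
          rw [hsx, smul_mulVec, dotProduct_smul, hM, vecMulVec_mulVec, dotProduct_smul,
            smul_eq_mul, smul_eq_mul, dotProduct_comm x v, sq]
        rw [hΘt, add_mulVec, dotProduct_add, h2]
        have : 0 ≤ t * (v ⬝ᵥ x) ^ 2 := mul_nonneg ht.le (sq_nonneg _)
        linarith
    -- Θhat * M = m • M
    have hΘM : Θhat * M = m • M := by
      ext i j
      have hi := congrFun hveig i
      simp only [mulVec, dotProduct, Pi.smul_apply, smul_eq_mul] at hi
      simp only [hM, mul_apply, vecMulVec_apply, Matrix.smul_apply, smul_eq_mul]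
      calc ∑ k, Θhat i k * (v k * v j) = (∑ k, Θhat i k * v k) * v j := by
            rw [Finset.sum_mul]; exact Finset.sum_congr rfl fun k _ => by ring
        _ = m * (v i * v j) := by rw [hi]; ring
    -- factorization and determinant
    have hfact : Θt = Θhat * (1 + (t / m) • M) := by
      rw [mul_add, mul_one, mul_smul_comm, hΘM, smul_smul, div_mul_cancel₀ _ hm.ne']
    have hdetX : (1 + (t / m) • M).det = 1 + t / m := by
      have hcol : (t / m) • M = replicateCol (Fin 1) ((t / m) • v) * replicateRow (Fin 1) v := by
        erw [← vecMulVec_eq (Fin 1)]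
        ext i j
        simp [hM, vecMulVec_apply, mul_assoc]
      rw [hcol]; erw [det_one_add_replicateCol_mul_replicateRow]; rw [dotProduct_smul, smul_eq_mul, hv1, mul_one]
    have hdet : Θt.det = Θhat.det * (1 + t / m) := by
      rw [hfact, det_mul, hdetX]
    have h1tm : (0:ℝ) < 1 + t / m := by positivity
    have hlog : Real.log Θt.det = Real.log Θhat.det + Real.log (1 + t / m) :=
      hdet ▸ Real.log_mul hΘ.det_pos.ne' h1tm.ne'
    -- trace
    have htr : (S * Θt).trace = (S * Θhat).trace + t * q := by
      rw [hΘt, mul_add, trace_add, mul_smul_comm, trace_smul, hM, trace_mul_vecMulVec,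
        smul_eq_mul]
    -- absolute values
    have habs : ∑ j, ∑ k, |Θt j k| ≤ (∑ j, ∑ k, |Θhat j k|) + t * p := by
      have hentry : ∀ j k, |Θt j k| ≤ |Θhat j k| + t * (|v j| * |v k|) := by
        intro j k
        have : Θt j k = Θhat j k + t * (v j * v k) := by
          simp [hΘt, hM, Matrix.add_apply, Matrix.smul_apply, vecMulVec_apply, smul_eq_mul]
        rw [this]
        calc |Θhat j k + t * (v j * v k)| ≤ |Θhat j k| + |t * (v j * v k)| := abs_add_le _ _
          _ = |Θhat j k| + t * (|v j| * |v k|) := by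
              rw [abs_mul, abs_mul, abs_of_pos ht]
      calc ∑ j, ∑ k, |Θt j k| ≤ ∑ j, ∑ k, (|Θhat j k| + t * (|v j| * |v k|)) :=
            Finset.sum_le_sum fun j _ => Finset.sum_le_sum fun k _ => hentry j k
        _ = (∑ j, ∑ k, |Θhat j k|) + t * ((∑ j, |v j|) * (∑ k, |v k|)) := by
            simp only [Finset.sum_add_distrib, ← Finset.mul_sum, ← Finset.sum_mul]
        _ ≤ (∑ j, ∑ k, |Θhat j k|) + t * p := by
            have := mul_le_mul_of_nonneg_left hl1 ht.le
            linarith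
    -- apply maximality
    have hcmp := hmax Θt hΘtpd
    simp only [glassoObj] at hcmp
    rw [hlog, htr] at hcmp
    have h1 : ρ * ∑ j, ∑ k, |Θt j k| ≤ ρ * ((∑ j, ∑ k, |Θhat j k|) + t * p) :=
      mul_le_mul_of_nonneg_left habs hρ.le
    have h2 : t * q ≤ t * maxEig S := mul_le_mul_of_nonneg_left hq ht.le
    rw [hC]
    nlinarith [hcmp, h1, h2]
  -- conclude: 1/(m+t) ≤ C for all t > 0
  have step2 : ∀ t : ℝ, 0 < t → 1 / (m + t) ≤ C := by
    intro t ht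
    have h1tm : (0:ℝ) < 1 + t / m := by positivity
    have hmt : (0:ℝ) < m + t := by linarith
    have hlog2 := Real.log_le_sub_one_of_pos (inv_pos.mpr h1tm)
    rw [Real.log_inv] at hlog2
    have hlow : 1 - (1 + t / m)⁻¹ ≤ Real.log (1 + t / m) := by linarith
    have hkey := key t ht
    have hinv : (1 + t / m)⁻¹ = m / (m + t) := by
      rw [eq_div_iff hmt.ne', inv_mul_eq_div, div_eq_iff h1tm.ne']
      field_simp
    have hfrac : 1 - (1 + t / m)⁻¹ = t / (m + t) := by
      rw [hinv]
      field_simp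
      ring
    rw [hfrac] at hlow
    have : t / (m + t) ≤ t * C := le_trans hlow hkey
    rw [div_le_iff₀ hmt] at this
    rw [div_le_iff₀ hmt]
    nlinarith
  refine le_of_forall_pos_le_add fun ε hε => ?_
  have ht : (0:ℝ) < m ^ 2 * ε := by positivity
  have h := step2 (m ^ 2 * ε) ht
  have hmt : (0:ℝ) < m + m ^ 2 * ε := by positivity
  rw [div_le_iff₀ hmt] at h
  rw [inv_eq_one_div, div_le_iff₀ hm]
  nlinarith [mul_pos hm hmt, sq_nonneg m, mul_pos hm hm]
end

section
/- Let p ≥ 1, ρ ≥ 0, let S ∈ ℝ^{p×p} be symmetric positive semidefinite, and suppose Θ₁ and Θ₂ are both symmetric positive definite p×p matrices maximizing the GLASSO objective Q_S(Θ) = log det Θ − tr(SΘ) − ρ ∑_{j,k=1}^p |Θ_{jk}| over all symmetric positive definite p×p matrices. Then Θ₁ = Θ₂, i.e. the GLASSO solution is unique. -/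
open Matrix

open scoped MatrixOrder in
/-- Strict midpoint log-concavity of the determinant on positive definite
matrices, in product form: `det A * det B < det(½(A+B))²` when `A ≠ B`. -/
lemma det_mul_det_lt_sq_det_midpoint {p : ℕ}
    (A B : Matrix (Fin p) (Fin p) ℝ) (hA : A.PosDef) (hB : B.PosDef)
    (hne : A ≠ B) :
    A.det * B.det < (((1:ℝ)/2) • (A + B)).det ^ 2 := by
  classical
  set s := CFC.sqrt A with hs_def
  have hss : s * s = A := CFC.sqrt_mul_sqrt_self A hA.posSemidef.nonneg
  have hsH : s.IsHermitian := (Matrix.nonneg_iff_posSemidef.mp (CFC.sqrt_nonneg A)).isHermitian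
  have hAdet : 0 < A.det := hA.det_pos
  have hBdet : 0 < B.det := hB.det_pos
  have hsdet : s.det ≠ 0 := by
    intro h
    rw [← hss, det_mul, h, mul_zero] at hAdet
    exact lt_irrefl _ hAdet
  have h1 : s * s⁻¹ = 1 := mul_nonsing_inv s (isUnit_iff_ne_zero.mpr hsdet)
  have h2 : s⁻¹ * s = 1 := nonsing_inv_mul s (isUnit_iff_ne_zero.mpr hsdet)
  set C := s⁻¹ * B * s⁻¹ with hC_def
  have hsiH : (s⁻¹).IsHermitian := hsH.inv
  have hCps : C.PosSemidef := by
    have := hB.posSemidef.mul_mul_conjTranspose_same s⁻¹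
    rwa [hsiH.eq] at this
  have hCH := hCps.isHermitian
  set lam := hCH.eigenvalues with hlam_def
  set U : Matrix (Fin p) (Fin p) ℝ := (hCH.eigenvectorUnitary : Matrix (Fin p) (Fin p) ℝ)
  have hUU : U * star U = 1 := Matrix.mem_unitaryGroup_iff.mp hCH.eigenvectorUnitary.2
  have hspec : C = U * diagonal (RCLike.ofReal ∘ lam) * star U := hCH.spectral_theorem
  -- B = s * C * s
  have hBC : s * C * s = B := by
    rw [hC_def]
    calc s * (s⁻¹ * B * s⁻¹) * s = (s * s⁻¹) * B * (s⁻¹ * s) := by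
          simp only [Matrix.mul_assoc]
      _ = B := by rw [h1, h2, one_mul, mul_one]
  -- determinant of C is product of eigenvalues
  have hdetC : C.det = ∏ i, lam i := by
    have := hCH.det_eq_prod_eigenvalues
    simpa using this
  have hdetB : B.det = A.det * C.det := by
    have hb : B.det = s.det * C.det * s.det := by rw [← hBC, det_mul, det_mul]
    have ha : A.det = s.det * s.det := by rw [← hss, det_mul]
    rw [hb, ha]; ring
  have hCdetpos : 0 < C.det := by
    have := hdetB
    nlinarith
  have hlam_nonneg : ∀ i, 0 ≤ lam i := fun i => hCps.eigenvalues_nonneg i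
  have hlam_pos : ∀ i, 0 < lam i := by
    intro i
    rcases lt_or_eq_of_le (hlam_nonneg i) with h | h
    · exact h
    · exfalso
      rw [hdetC] at hCdetpos
      have : ∏ j, lam j = 0 := Finset.prod_eq_zero (Finset.mem_univ i) h.symm
      rw [this] at hCdetpos
      exact lt_irrefl _ hCdetpos
  -- A + B = s * (1 + C) * s
  have hAB : A + B = s * (1 + C) * s := by
    rw [mul_add, add_mul, mul_one, hss, hBC]
  -- det (1 + C) = ∏ (1 + lam i)
  have hdet1C : (1 + C).det = ∏ i, (1 + lam i) := by
    have key : (1 : Matrix (Fin p) (Fin p) ℝ) + C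
        = U * (1 + diagonal (RCLike.ofReal ∘ lam)) * star U := by
      rw [mul_add, add_mul, mul_one, hUU, ← hspec]
    rw [key, det_mul_right_comm, hUU, one_mul]
    have : (1 : Matrix (Fin p) (Fin p) ℝ) + diagonal (RCLike.ofReal ∘ lam)
        = diagonal (fun i => 1 + lam i) := by
      rw [← diagonal_one, diagonal_add]
      rfl
    rw [this, det_diagonal]
  -- if all eigenvalues are 1 then C = 1 and A = B
  have hexists : ∃ i, lam i ≠ 1 := by
    by_contra h
    push_neg at h
    have hC1 : C = 1 := by
      rw [hspec]
      have hfun : (RCLike.ofReal ∘ lam : Fin p → ℝ) = fun _ => 1 := by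
        funext i; simp [h i]
      have : diagonal (RCLike.ofReal ∘ lam) = (1 : Matrix (Fin p) (Fin p) ℝ) := by
        rw [hfun]; simp
      rw [this, mul_one, hUU]
    apply hne
    rw [← hBC, hC1, mul_one, hss]
  -- the scalar inequality on eigenvalue products
  have hprod : ∏ i, lam i < ∏ i, ((1 + lam i)/2) ^ 2 := by
    obtain ⟨i₀, hi₀⟩ := hexists
    apply Finset.prod_lt_prod (fun i _ => hlam_pos i)
    · intro i _
      nlinarith [sq_nonneg (1 - lam i), hlam_pos i]
    · refine ⟨i₀, Finset.mem_univ i₀, ?_⟩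
      have h10 : (1 : ℝ) - lam i₀ ≠ 0 := by
        intro h; apply hi₀; linarith
      have hpos : 0 < (1 - lam i₀) ^ 2 :=
        lt_of_le_of_ne (sq_nonneg _) (Ne.symm (pow_ne_zero 2 h10))
      nlinarith [hpos]
  -- assemble
  have hdetmid : (((1:ℝ)/2) • (A + B)).det = ((1:ℝ)/2) ^ p * (A.det * ∏ i, (1 + lam i)) := by
    rw [det_smul, hAB, det_mul, det_mul, ← hdet1C]
    have : s.det * (1 + C).det * s.det = A.det * (1 + C).det := by
      rw [← hss, det_mul]; ring
    simp [Fintype.card_fin]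
    rw [← hss, det_mul]
    ring
  rw [hdetmid, hdetB, hdetC]
  have hexp : (((1:ℝ)/2) ^ p * (A.det * ∏ i, (1 + lam i))) ^ 2
      = A.det ^ 2 * ∏ i, ((1 + lam i)/2) ^ 2 := by
    have h2p : ∏ i : Fin p, ((1 + lam i)/2) = ((1:ℝ)/2) ^ p * ∏ i, (1 + lam i) := by
      rw [Finset.prod_div_distrib]
      simp [Finset.card_univ, Fintype.card_fin, div_eq_mul_inv, one_div, mul_comm]
    rw [Finset.prod_pow, h2p]
    ring
  rw [hexp]
  have := mul_lt_mul_of_pos_left hprod (pow_pos hAdet 2)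
  nlinarith [this]

theorem glasso_solution_unique
    (p : ℕ) (hp : 1 ≤ p) (ρ : ℝ) (hρ : 0 ≤ ρ)
    (S : Matrix (Fin p) (Fin p) ℝ) (hS : S.PosSemidef)
    (Θ₁ Θ₂ : Matrix (Fin p) (Fin p) ℝ) (hΘ₁ : Θ₁.PosDef) (hΘ₂ : Θ₂.PosDef)
    (hmax₁ : ∀ Θ : Matrix (Fin p) (Fin p) ℝ, Θ.PosDef →
      glassoObj ρ S Θ ≤ glassoObj ρ S Θ₁)
    (hmax₂ : ∀ Θ : Matrix (Fin p) (Fin p) ℝ, Θ.PosDef →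
      glassoObj ρ S Θ ≤ glassoObj ρ S Θ₂) :
    Θ₁ = Θ₂ := by
  by_contra hne
  set Θ : Matrix (Fin p) (Fin p) ℝ := ((1:ℝ)/2) • (Θ₁ + Θ₂) with hΘ_def
  have hΘpd : Θ.PosDef := by
    refine Matrix.PosDef.of_dotProduct_mulVec_pos ?_ ?_
    · unfold Matrix.IsHermitian
      rw [hΘ_def, conjTranspose_smul, conjTranspose_add, hΘ₁.1, hΘ₂.1, star_trivial]
    · intro x hx
      have h1 := hΘ₁.dotProduct_mulVec_pos hx
      have h2 := hΘ₂.dotProduct_mulVec_pos hx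
      rw [hΘ_def]
      simp only [smul_mulVec, add_mulVec, dotProduct_smul, dotProduct_add] at *
      simp only [smul_eq_mul, RCLike.ofReal_real_eq_id, id] at *
      positivity
  have hQeq : glassoObj ρ S Θ₁ = glassoObj ρ S Θ₂ :=
    le_antisymm (hmax₂ Θ₁ hΘ₁) (hmax₁ Θ₂ hΘ₂)
  -- the three estimates
  have hlog : Real.log Θ₁.det + Real.log Θ₂.det < 2 * Real.log Θ.det := by
    have hkey := det_mul_det_lt_sq_det_midpoint Θ₁ Θ₂ hΘ₁ hΘ₂ hne
    have h1 : 0 < Θ₁.det := hΘ₁.det_pos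
    have h2 : 0 < Θ₂.det := hΘ₂.det_pos
    have := Real.log_lt_log (by positivity) hkey
    rwa [Real.log_mul (ne_of_gt h1) (ne_of_gt h2), Real.log_pow, Nat.cast_ofNat] at this
  have htr : (S * Θ).trace = ((S * Θ₁).trace + (S * Θ₂).trace) / 2 := by
    rw [hΘ_def, Matrix.mul_smul, trace_smul, Matrix.mul_add, trace_add]
    simp [smul_eq_mul]
    ring
  have habs : ∑ j, ∑ k, |Θ j k| ≤ ((∑ j, ∑ k, |Θ₁ j k|) + ∑ j, ∑ k, |Θ₂ j k|) / 2 := by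
    rw [div_eq_inv_mul, ← Finset.sum_add_distrib, Finset.mul_sum]
    apply Finset.sum_le_sum
    intro j _
    rw [← Finset.sum_add_distrib, Finset.mul_sum]
    apply Finset.sum_le_sum
    intro k _
    rw [hΘ_def]
    simp only [Matrix.smul_apply, Matrix.add_apply, smul_eq_mul]
    rw [abs_mul]
    rw [abs_of_nonneg (by norm_num : (0:ℝ) ≤ 1/2)]
    calc 1/2 * |Θ₁ j k + Θ₂ j k| ≤ 1/2 * (|Θ₁ j k| + |Θ₂ j k|) := by
          have := abs_add_le (Θ₁ j k) (Θ₂ j k); linarith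
      _ = 2⁻¹ * (|Θ₁ j k| + |Θ₂ j k|) := by norm_num
  have hcontra : glassoObj ρ S Θ₁ < glassoObj ρ S Θ := by
    have hρs : ρ * ∑ j, ∑ k, |Θ j k|
        ≤ ρ * (((∑ j, ∑ k, |Θ₁ j k|) + ∑ j, ∑ k, |Θ₂ j k|) / 2) :=
      mul_le_mul_of_nonneg_left habs hρ
    have hQ2 : glassoObj ρ S Θ₂ = glassoObj ρ S Θ₁ := hQeq.symm
    unfold glassoObj at *
    nlinarith [hlog, htr, hρs, hQ2]
  exact absurd (hmax₁ Θ hΘpd) (not_le.mpr hcontra)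
end
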